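/- For every integer ν ≥ 2 and z ≠ 0, the quantity S(ν,z) := (1/√π)·∑_{j=0}^{ν-2} ((z/2)^{ν-1-j}/Γ(ν+1/2-j))·C_j(ν,z), where C_j(ν,z) satisfies C₀=1, C₁=2(ν-1)/z, C_j = (2(ν-j)/z)C_{j-1} − C_{j-2}, equals (2^{2ν-1}/π)·∑_{j=0}^{ν-2} (Γ(ν-j)·2^{-2j}/Γ(2ν-2j))·∑_{κ=0}^{⌈(j-1)/2⌉} ((-1)^κ·Γ(ν-κ)·Γ(j+1-κ))/(Γ(j+1-2κ)·Γ(κ+ν-j)·κ!)·(z/2)^{2κ-2j+ν-1}. -/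

import Mathlib

open Real Finset

/-- The coefficients `C_n(ν,z)`: `C₀ = 1`, `C₁ = 2(ν-1)/z`,
`C_n = (2(ν-n)/z) C_{n-1} - C_{n-2}`. -/
noncomputable def lomC (ν z : ℝ) : ℕ → ℝ
  | 0 => 1
  | 1 => 2 * (ν - 1) / z
  | (n + 2) => (2 * (ν - (n + 2)) / z) * lomC ν z (n + 1) - lomC ν z n

/-- `S(ν,z) = (1/√π) ∑_{j=0}^{ν-2} (z/2)^{ν-1-j} C_j(ν,z) / Γ(ν+1/2-j)`. -/
noncomputable def Ssum (ν : ℕ) (z : ℝ) : ℝ :=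
  (1 / Real.sqrt Real.pi) *
    ∑ j ∈ Finset.range (ν - 1),
      (z / 2)^(ν - 1 - j) / Real.Gamma ((ν : ℝ) + 1/2 - j) * lomC (ν : ℝ) z j

noncomputable def aC (ν j κ : ℕ) : ℝ :=
  ((-1)^κ * Real.Gamma ((ν:ℝ) - κ) * Real.Gamma ((j:ℝ) + 1 - κ)) /
    (Real.Gamma ((j:ℝ) + 1 - 2*κ) * Real.Gamma ((κ:ℝ) + ν - j) * (κ.factorial : ℝ))

lemma aC_formula (m j κ : ℕ) (h : 2*κ ≤ j) :
    aC (j+1+m) j κ =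
      ((-1)^κ * ((j+m-κ).factorial : ℝ) * ((j-κ).factorial : ℝ)) /
        (((j-2*κ).factorial : ℝ) * ((κ+m).factorial : ℝ) * (κ.factorial : ℝ)) := by
  have h1 : (((j+1+m : ℕ)):ℝ) - κ = ((j+m-κ : ℕ):ℝ) + 1 := by
    rw [Nat.cast_sub (by omega)]; push_cast; ring
  have h2 : ((j:ℝ)) + 1 - κ = ((j-κ : ℕ):ℝ) + 1 := by
    rw [Nat.cast_sub (by omega)]; ring
  have h3 : ((j:ℝ)) + 1 - 2*κ = ((j-2*κ : ℕ):ℝ) + 1 := by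
    rw [Nat.cast_sub (by omega)]; push_cast; ring
  have h4 : ((κ:ℝ)) + (((j+1+m:ℕ)):ℝ) - j = ((κ+m : ℕ):ℝ) + 1 := by
    push_cast; ring
  rw [aC, h1, h2, h3, h4, Real.Gamma_nat_eq_factorial, Real.Gamma_nat_eq_factorial,
    Real.Gamma_nat_eq_factorial, Real.Gamma_nat_eq_factorial]

lemma fact_ne (n : ℕ) : ((n.factorial : ℝ)) ≠ 0 := by
  exact_mod_cast n.factorial_pos.ne'

lemma fact_cast_succ (n : ℕ) : (((n+1).factorial : ℝ)) = (n+1) * (n.factorial : ℝ) := by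
  rw [Nat.factorial_succ]; push_cast; ring

lemma aC_odd_top (ν k : ℕ) : aC ν (2*k+1) (k+1) = 0 := by
  have h : (((2*k+1 : ℕ)):ℝ) + 1 - 2*((k+1 : ℕ):ℝ) = 0 := by push_cast; ring
  rw [aC]
  push_cast at h ⊢
  rw [h, Real.Gamma_zero]
  simp

lemma aC_zero_step (ν j : ℕ) (hν : j + 4 ≤ ν) :
    aC ν (j+2) 0 = ((ν:ℝ) - j - 2) * aC ν (j+1) 0 := by
  obtain ⟨m, rfl⟩ : ∃ m, ν = (j+4)+m := ⟨ν - (j+4), by omega⟩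
  have e1 : (j+4)+m = (j+2)+1+(m+1) := by omega
  have e2 : (j+4)+m = (j+1)+1+(m+2) := by omega
  rw [e1, aC_formula (m+1) (j+2) 0 (by omega), ← e1, e2, aC_formula (m+2) (j+1) 0 (by omega)]
  simp only [Nat.mul_zero, Nat.sub_zero, Nat.zero_add, Nat.factorial_zero, pow_zero]
  have c1 : (j+2)+(m+1) = j+m+3 := by omega
  have c2 : (j+1)+(m+2) = j+m+3 := by omega
  rw [c1, c2]
  have cν : (((j+1+1+(m+2) : ℕ)):ℝ) - j - 2 = (m+2 : ℝ) := by push_cast; ring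
  rw [cν, show m+2 = (m+1)+1 from rfl, fact_cast_succ (m+1)]
  have := fact_ne (j+2); have := fact_ne (j+1); have := fact_ne (m+1); have := fact_ne (j+m+3)
  have c9 : (((j+2).factorial : ℝ)) = ((j:ℝ)+2) * ((j+1).factorial : ℝ) := by
    have := fact_cast_succ (j+1); push_cast at this ⊢; linarith [this]
  rw [c9]
  field_simp
  push_cast
  ring

lemma aC_step_generic (ν j κ : ℕ) (hκ : 2*κ+1 ≤ j) (hν : j + 4 ≤ ν) :
    aC ν (j+2) (κ+1) = ((ν:ℝ) - j - 2) * aC ν (j+1) (κ+1) - aC ν j κ := by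
  obtain ⟨d, rfl⟩ : ∃ d, j = 2*κ+1+d := ⟨j - (2*κ+1), by omega⟩
  obtain ⟨m, rfl⟩ : ∃ m, ν = (2*κ+1+d)+4+m := ⟨ν - ((2*κ+1+d)+4), by omega⟩
  have e1 : (2*κ+1+d)+4+m = ((2*κ+1+d)+2)+1+(m+1) := by omega
  have e2 : (2*κ+1+d)+4+m = ((2*κ+1+d)+1)+1+(m+2) := by omega
  have e3 : (2*κ+1+d)+4+m = (2*κ+1+d)+1+(m+3) := by omega
  rw [e1, aC_formula (m+1) ((2*κ+1+d)+2) (κ+1) (by omega), ← e1,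
      e2, aC_formula (m+2) ((2*κ+1+d)+1) (κ+1) (by omega), ← e2,
      e3, aC_formula (m+3) (2*κ+1+d) κ (by omega), ← e3]
  have c1 : (2*κ+1+d)+2+(m+1)-(κ+1) = κ+d+m+3 := by omega
  have c2 : (2*κ+1+d)+2-(κ+1) = κ+d+2 := by omega
  have c3 : (2*κ+1+d)+2-2*(κ+1) = d+1 := by omega
  have c4 : (2*κ+1+d)+1+(m+2)-(κ+1) = κ+d+m+3 := by omega
  have c5 : (2*κ+1+d)+1-(κ+1) = κ+d+1 := by omega
  have c6 : (2*κ+1+d)+1-2*(κ+1) = d := by omega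
  have c7 : (2*κ+1+d)+(m+3)-κ = κ+d+m+4 := by omega
  have c8 : (2*κ+1+d)-κ = κ+d+1 := by omega
  have c9 : (2*κ+1+d)-2*κ = d+1 := by omega
  have c10 : (κ+1)+(m+1) = κ+m+2 := by omega
  have c11 : (κ+1)+(m+2) = κ+m+3 := by omega
  have c12 : κ+(m+3) = κ+m+3 := by omega
  rw [c1, c2, c3, c4, c5, c6, c7, c8, c9, c10, c11, c12]
  have cν : ((((2*κ+1+d)+4+m : ℕ)):ℝ) - (((2*κ+1+d) : ℕ):ℝ) - 2 = (m:ℝ)+2 := by push_cast; ring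
  rw [cν]
  -- factorial reductions
  have f1 : (((κ+d+m+4).factorial : ℝ)) = ((κ:ℝ)+d+m+4) * ((κ+d+m+3).factorial : ℝ) := by
    have := fact_cast_succ (κ+d+m+3); push_cast at this ⊢
    rw [show κ+d+m+4 = κ+d+m+3+1 by omega]; push_cast; linarith [this]
  have f2 : (((κ+d+2).factorial : ℝ)) = ((κ:ℝ)+d+2) * ((κ+d+1).factorial : ℝ) := by
    have := fact_cast_succ (κ+d+1); push_cast at this ⊢
    rw [show κ+d+2 = κ+d+1+1 by omega]; push_cast; linarith [this]
  have f3 : (((d+1).factorial : ℝ)) = ((d:ℝ)+1) * (d.factorial : ℝ) := by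
    have := fact_cast_succ d; push_cast at this ⊢; linarith [this]
  have f4 : (((κ+m+3).factorial : ℝ)) = ((κ:ℝ)+m+3) * ((κ+m+2).factorial : ℝ) := by
    have := fact_cast_succ (κ+m+2); push_cast at this ⊢
    rw [show κ+m+3 = κ+m+2+1 by omega]; push_cast; linarith [this]
  have f5 : (((κ+1).factorial : ℝ)) = ((κ:ℝ)+1) * (κ.factorial : ℝ) := by
    have := fact_cast_succ κ; push_cast at this ⊢; linarith [this]
  rw [f1, f2, f3, f4, f5]
  have n1 := fact_ne (κ+d+m+3); have n2 := fact_ne (κ+d+1); have n3 := fact_ne d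
  have n4 := fact_ne (κ+m+2); have n5 := fact_ne κ
  have p1 : ((κ:ℝ)+d+2) ≠ 0 := by positivity
  have p2 : ((d:ℝ)+1) ≠ 0 := by positivity
  have p3 : ((κ:ℝ)+m+3) ≠ 0 := by positivity
  have p4 : ((κ:ℝ)+1) ≠ 0 := by positivity
  rw [pow_succ]
  field_simp
  ring

lemma aC_step_edge (ν κ : ℕ) (hν : 2*κ + 4 ≤ ν) :
    aC ν (2*κ+2) (κ+1) = ((ν:ℝ) - (2*κ) - 2) * aC ν (2*κ+1) (κ+1) - aC ν (2*κ) κ := by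
  obtain ⟨m, rfl⟩ : ∃ m, ν = (2*κ+4)+m := ⟨ν - (2*κ+4), by omega⟩
  have hmid : aC ((2*κ+4)+m) (2*κ+1) (κ+1) = 0 := aC_odd_top _ κ
  rw [hmid, mul_zero, zero_sub]
  have e1 : (2*κ+4)+m = (2*κ+2)+1+(m+1) := by omega
  have e3 : (2*κ+4)+m = (2*κ)+1+(m+3) := by omega
  rw [e1, aC_formula (m+1) (2*κ+2) (κ+1) (by omega), ← e1,
      e3, aC_formula (m+3) (2*κ) κ (by omega)]
  have c1 : (2*κ+2)+(m+1)-(κ+1) = κ+m+2 := by omega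
  have c2 : (2*κ+2)-(κ+1) = κ+1 := by omega
  have c3 : (2*κ+2)-2*(κ+1) = 0 := by omega
  have c4 : (2*κ)+(m+3)-κ = κ+m+3 := by omega
  have c5 : (2*κ)-κ = κ := by omega
  have c6 : (2*κ)-2*κ = 0 := by omega
  have c7 : (κ+1)+(m+1) = κ+m+2 := by omega
  have c8 : κ+(m+3) = κ+m+3 := by omega
  rw [c1, c2, c3, c4, c5, c6, c7, c8]
  have n1 := fact_ne (κ+m+2); have n2 := fact_ne (κ+1); have n3 := fact_ne (κ+m+3)
  have n4 := fact_ne κ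
  rw [pow_succ]
  field_simp


lemma aC_base0 (ν : ℕ) (hν : 2 ≤ ν) : aC ν 0 0 = 1 := by
  obtain ⟨m, rfl⟩ : ∃ m, ν = 0+1+(m+1) := ⟨ν - 2, by omega⟩
  rw [aC_formula (m+1) 0 0 (by omega)]
  simp [div_self (fact_ne (m+1))]

lemma aC_base1 (ν : ℕ) (hν : 3 ≤ ν) : aC ν 1 0 = (ν:ℝ) - 1 := by
  obtain ⟨m, rfl⟩ : ∃ m, ν = 1+1+(m+1) := ⟨ν - 3, by omega⟩
  rw [aC_formula (m+1) 1 0 (by omega)]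
  have c1 : 1+(m+1)-0 = m+2 := by omega
  have c4 : 0+(m+1) = m+1 := by omega
  rw [c1, c4, show m+2 = (m+1)+1 from rfl, fact_cast_succ (m+1)]
  have := fact_ne (m+1)
  field_simp
  push_cast
  ring

lemma lomC_expand (ν : ℕ) (z : ℝ) (hz : z ≠ 0) :
    ∀ j, j + 2 ≤ ν →
      lomC (ν:ℝ) z j = ∑ κ ∈ range (j/2+1), aC ν j κ * (z/2)^(2*(κ:ℤ) - j) := by
  have hx : z/2 ≠ 0 := by positivity
  intro j
  induction j using Nat.strong_induction_on with
  | _ j ih =>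
    match j with
    | 0 =>
      intro hj
      simp [lomC, aC_base0 ν (by omega)]
    | 1 =>
      intro hj
      rw [lomC]
      simp only [Nat.reduceDiv, zero_add, range_one, sum_singleton, Nat.cast_zero,
        Nat.cast_one, mul_zero, zero_sub, aC_base1 ν (by omega)]
      rw [zpow_neg_one, inv_div]
      field_simp
    | (j+2) =>
      intro hj
      have h1 := ih (j+1) (by omega) (by omega)
      have h0 := ih j (by omega) (by omega)
      rw [lomC, h1, h0]
      push_cast
      -- extend the (j+1) sum to range (j/2+2)
      have hext : ∑ κ ∈ range ((j+1)/2+1), aC ν (j+1) κ * (z/2)^(2*(κ:ℤ) - (j+1)) =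
          ∑ κ ∈ range (j/2+2), aC ν (j+1) κ * (z/2)^(2*(κ:ℤ) - (j+1)) := by
        rcases Nat.even_or_odd j with he | ho
        · obtain ⟨k, rfl⟩ := he
          rw [show (k+k+1)/2+1 = k+1 by omega, show (k+k)/2+2 = k+2 by omega]
          conv_rhs => rw [sum_range_succ]
          have h0' : aC ν (k+k+1) (k+1) = 0 := by
            rw [show k+k+1 = 2*k+1 by ring]; exact aC_odd_top ν k
          rw [h0', zero_mul, add_zero]
        · obtain ⟨k, rfl⟩ := ho
          rw [show (2*k+1+1)/2+1 = k+2 by omega, show (2*k+1)/2+2 = k+2 by omega]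
      rw [hext, Finset.mul_sum]
      rw [show (j+2)/2+1 = j/2+1+1 by omega, show j/2+2 = j/2+1+1 by omega]
      have hpt : ∀ κ ∈ range (j/2+1),
          aC ν (j+2) (κ+1) * (z/2)^(2*((κ+1:ℕ):ℤ) - ((j:ℤ)+2)) =
            2*((ν:ℝ) - ((j:ℝ)+2))/z * (aC ν (j+1) (κ+1) * (z/2)^(2*((κ+1:ℕ):ℤ) - ((j:ℤ)+1)))
              - aC ν j κ * (z/2)^(2*(κ:ℤ) - (j:ℤ)) := by
        intro κ hκ
        have hκ' : 2*κ ≤ j := by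
          rw [mem_range] at hκ; omega
        have hcoef : aC ν (j+2) (κ+1) = ((ν:ℝ) - j - 2) * aC ν (j+1) (κ+1) - aC ν j κ := by
          rcases Nat.lt_or_ge (2*κ) j with h | h
          · exact aC_step_generic ν j κ (by omega) (by omega)
          · have hje : j = 2*κ := by omega
            subst hje
            have h' := aC_step_edge ν κ (by omega)
            push_cast at h' ⊢
            exact h'
        push_cast
        rw [hcoef]
        rw [show (2*((κ:ℤ)+1) - ((j:ℤ)+2)) = 2*(κ:ℤ) - (j:ℤ) by ring,
          show (2*((κ:ℤ)+1) - ((j:ℤ)+1)) = (2*(κ:ℤ) - (j:ℤ)) + 1 by ring,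
          zpow_add_one₀ hx]
        field_simp
        ring
      have h00 : aC ν (j+2) 0 * (z/2)^(2*((0:ℕ):ℤ) - ((j:ℤ)+2)) =
          2*((ν:ℝ) - ((j:ℝ)+2))/z * (aC ν (j+1) 0 * (z/2)^(2*((0:ℕ):ℤ) - ((j:ℤ)+1))) := by
        rw [aC_zero_step ν j (by omega)]
        rw [show (2*(((0:ℕ)):ℤ) - ((j:ℤ)+1)) = (2*(((0:ℕ)):ℤ) - ((j:ℤ)+2)) + 1 by push_cast; ring,
          zpow_add_one₀ hx]
        field_simp
        ring
      have main : ∑ κ ∈ range (j/2+1+1), aC ν (j+2) κ * (z/2)^(2*(κ:ℤ) - ((j:ℤ)+2)) =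
          ∑ κ ∈ range (j/2+1+1),
              2*((ν:ℝ) - ((j:ℝ)+2))/z * (aC ν (j+1) κ * (z/2)^(2*(κ:ℤ) - ((j:ℤ)+1)))
            - ∑ κ ∈ range (j/2+1), aC ν j κ * (z/2)^(2*(κ:ℤ) - (j:ℤ)) := by
        rw [Finset.sum_range_succ'
            (fun κ => aC ν (j+2) κ * (z/2)^(2*(κ:ℤ) - ((j:ℤ)+2))) (j/2+1),
          Finset.sum_range_succ'
            (fun κ => 2*((ν:ℝ) - ((j:ℝ)+2))/z * (aC ν (j+1) κ * (z/2)^(2*(κ:ℤ) - ((j:ℤ)+1))))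
            (j/2+1)]
        rw [Finset.sum_congr rfl hpt, h00, Finset.sum_sub_distrib]
        ring
      exact main.symm

lemma coef_eq (ν j : ℕ) (hj : j + 2 ≤ ν) :
    (1 / Real.sqrt Real.pi) * (1 / Real.Gamma ((ν:ℝ) + 1/2 - j)) =
      (2^(2*ν-1) / Real.pi) *
        (Real.Gamma ((ν:ℝ) - j) * (2:ℝ)^(-(2*(j:ℤ))) / Real.Gamma (2*(ν:ℝ) - 2*j)) := by
  have hjν : (j:ℝ) + 2 ≤ ν := by exact_mod_cast hj
  have hs : (0:ℝ) < (ν:ℝ) - j := by linarith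
  have hdup := Real.Gamma_mul_Gamma_add_half ((ν:ℝ) - j)
  have hG1 : 0 < Real.Gamma ((ν:ℝ) - j) := Real.Gamma_pos_of_pos hs
  have hG2 : 0 < Real.Gamma (2*((ν:ℝ) - j)) := Real.Gamma_pos_of_pos (by linarith)
  have hG3 : 0 < Real.Gamma (((ν:ℝ) - j) + 1/2) := Real.Gamma_pos_of_pos (by linarith)
  have hsp : 0 < Real.sqrt Real.pi := Real.sqrt_pos.mpr Real.pi_pos
  have hππ : Real.sqrt Real.pi * Real.sqrt Real.pi = Real.pi := Real.mul_self_sqrt Real.pi_pos.le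
  have e1 : (ν:ℝ) + 1/2 - j = ((ν:ℝ) - j) + 1/2 := by ring
  have e2 : 2*(ν:ℝ) - 2*j = 2*((ν:ℝ) - j) := by ring
  rw [e1, e2]
  have hpow : (2:ℝ) ^ (1 - 2*((ν:ℝ) - j)) = (2:ℝ) ^ ((1 - 2*(ν:ℤ) + 2*(j:ℤ))) := by
    rw [show (1 - 2*((ν:ℝ) - j)) = (((1 - 2*(ν:ℤ) + 2*(j:ℤ)):ℤ):ℝ) by push_cast; ring,
      Real.rpow_intCast]
  rw [hpow] at hdup
  have key : (2:ℝ)^(2*ν-1) * ((2:ℝ)^(-(2*(j:ℤ))) * (2:ℝ)^((1 - 2*(ν:ℤ) + 2*(j:ℤ)))) = 1 := by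
    rw [show ((2:ℝ)^(2*ν-1 : ℕ)) = (2:ℝ)^(((2*ν-1 : ℕ):ℤ)) from (zpow_natCast 2 (2*ν-1)).symm,
      ← zpow_add₀ (two_ne_zero (α := ℝ)), ← zpow_add₀ (two_ne_zero (α := ℝ)),
      show (((2*ν-1:ℕ):ℤ) + (-(2*(j:ℤ)) + (1 - 2*(ν:ℤ) + 2*(j:ℤ)))) = 0 by omega, zpow_zero]
  have hz1 : (2:ℝ)^(-(2*(j:ℤ))) ≠ 0 := zpow_ne_zero _ two_ne_zero
  have hz2 : (2:ℝ)^((1 - 2*(ν:ℤ) + 2*(j:ℤ))) ≠ 0 := zpow_ne_zero _ two_ne_zero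
  have hGs : Real.Gamma (((ν:ℝ) - j) + 1/2) =
      Real.Gamma (2*((ν:ℝ) - j)) * (2:ℝ)^((1 - 2*(ν:ℤ) + 2*(j:ℤ))) * Real.sqrt Real.pi
        / Real.Gamma ((ν:ℝ) - j) := by
    rw [eq_div_iff hG1.ne']
    linear_combination hdup
  rw [hGs]
  have inv2 : (2:ℝ)^(-(2*(j:ℤ))) * (2:ℝ)^((2*(j:ℤ))) = 1 := by
    rw [← zpow_add₀ (two_ne_zero (α := ℝ))]; simp
  field_simp
  linear_combination (-((2:ℝ)^((1 - 2*(ν:ℤ) + 2*(j:ℤ))) * (2:ℝ)^(-(2*(j:ℤ))) * 2^(2*ν-1))) * hππ -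
    Real.pi * key


/-- for `ν ≥ 2` and `z ≠ 0`,
`S(ν,z) = (2^{2ν-1}/π) ∑_{j=0}^{ν-2} (Γ(ν-j) 2^{-2j}/Γ(2ν-2j)) ∑_{κ=0}^{⌈(j-1)/2⌉}
 (-1)^κ Γ(ν-κ) Γ(j+1-κ)/(Γ(j+1-2κ) Γ(κ+ν-j) κ!) (z/2)^{2κ-2j+ν-1}`
(with `⌈(j-1)/2⌉ = j/2` in natural division). -/
theorem Ssum_eq (ν : ℕ) (hν : 2 ≤ ν) (z : ℝ) (hz : z ≠ 0) :
    Ssum ν z =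
      (2^(2 * ν - 1) / Real.pi) *
        ∑ j ∈ Finset.range (ν - 1),
          (Real.Gamma ((ν : ℝ) - j) * (2 : ℝ)^(-(2 * (j : ℤ))) /
              Real.Gamma (2 * (ν : ℝ) - 2 * j)) *
            ∑ κ ∈ Finset.range (j / 2 + 1),
              ((-1)^κ * Real.Gamma ((ν : ℝ) - κ) * Real.Gamma ((j : ℝ) + 1 - κ)) /
                (Real.Gamma ((j : ℝ) + 1 - 2 * κ) * Real.Gamma ((κ : ℝ) + ν - j) *
                  (κ.factorial : ℝ)) *
                (z / 2)^(2 * (κ : ℤ) - 2 * j + ν - 1) := by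
  have hx : z/2 ≠ 0 := by positivity
  rw [Ssum, Finset.mul_sum, Finset.mul_sum]
  apply Finset.sum_congr rfl
  intro j hj
  rw [mem_range] at hj
  have hjν : j + 2 ≤ ν := by omega
  rw [lomC_expand ν z hz j hjν]
  rw [Finset.mul_sum, Finset.mul_sum, Finset.mul_sum, Finset.mul_sum]
  apply Finset.sum_congr rfl
  intro κ _
  have hxp : (z/2)^(ν-1-j) * (z/2:ℝ)^(2*(κ:ℤ) - j) = (z/2)^(2*(κ:ℤ) - 2*j + ν - 1) := by
    rw [← zpow_natCast (z/2) (ν-1-j), ← zpow_add₀ hx,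
      show ((ν-1-j : ℕ):ℤ) + (2*(κ:ℤ) - j) = 2*(κ:ℤ) - 2*j + ν - 1 by omega]
  calc (1 / Real.sqrt Real.pi) * ((z/2)^(ν-1-j) / Real.Gamma ((ν:ℝ) + 1/2 - j) *
        (aC ν j κ * (z/2)^(2*(κ:ℤ) - j)))
      = ((1 / Real.sqrt Real.pi) * (1 / Real.Gamma ((ν:ℝ) + 1/2 - j))) * aC ν j κ *
          ((z/2)^(ν-1-j) * (z/2)^(2*(κ:ℤ) - j)) := by ring
    _ = _ := by
        rw [hxp, coef_eq ν j hjν]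
        simp only [aC]
        ring
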